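/- Let h : Q → P be an injective, integral homomorphism of fine, sharp additive commutative monoids, without nilpotents, and suppose the quotient monoid P/Q is isomorphic to ℤ. Then there exist a unique q0 ∈ Q and elements p1, p-1 ∈ P (unique up to interchanging p1 and p-1) with p1 + p-1 = h(q0) such that the square formed by the maps ℕ → Q (n ↦ n•q0), the diagonal Δ : ℕ → ℕ × ℕ (n ↦ (n, n)), h : Q → P, and ℕ × ℕ → P ((m, n) ↦ m•p1 + n•p-1) is cocartesian in the category of additive commutative monoids; that is, for every additive commutative monoid T and homomorphisms u : Q → T and v : ℕ × ℕ → T with v(1,1) = u(q0), there is a unique homomorphism w : P → T with w ∘ h = u, w(p1) = v(1,0), and w(p-1) = v(0,1). -/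

import Mathlib

/-- A (additive commutative) monoid is sharp if `x + y = 0` implies `x = 0`. -/
def Sharp (M : Type*) [AddCommMonoid M] : Prop :=
  ∀ x y : M, x + y = 0 → x = 0

/-- A monoid is cancellative if `a + c = b + c` implies `a = b`. -/
def Cancellative (M : Type*) [AddCommMonoid M] : Prop :=
  ∀ a b c : M, a + c = b + c → a = b

/-- A monoid homomorphism `h : Q →+ P` is integral if whenever
`p1 + h q1 = p2 + h q2` there are `q3, q4, p` with `p1 = p + h q4`,
`p2 = p + h q3` and `q1 + q4 = q2 + q3`. -/
def IntegralHom {Q P : Type*} [AddCommMonoid Q] [AddCommMonoid P] (h : Q →+ P) : Prop :=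
  ∀ (q1 q2 : Q) (p1 p2 : P), p1 + h q1 = p2 + h q2 →
    ∃ (q3 q4 : Q) (p : P), p1 = p + h q4 ∧ p2 = p + h q3 ∧ q1 + q4 = q2 + q3

/-- An element `p` of `P` is `Q`-primitive (relative to `h : Q →+ P`) if whenever
`p = p' + h q` one has `q = 0`. -/
def QPrimitive {Q P : Type*} [AddCommMonoid Q] [AddCommMonoid P] (h : Q →+ P) (p : P) : Prop :=
  ∀ (p' : P) (q : Q), p = p' + h q → q = 0

/-- Membership in the ideal `I_Q = {h q + p : q ∈ Q, q ≠ 0, p ∈ P}`. -/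
def MemIQ {Q P : Type*} [AddCommMonoid Q] [AddCommMonoid P] (h : Q →+ P) (p : P) : Prop :=
  ∃ q : Q, q ≠ 0 ∧ ∃ p' : P, p = h q + p'

/-- `h` is without nilpotents if `n • p ∈ I_Q` for some `n ≥ 1` implies `p ∈ I_Q`. -/
def WithoutNilpotents {Q P : Type*} [AddCommMonoid Q] [AddCommMonoid P] (h : Q →+ P) : Prop :=
  ∀ (p : P) (n : ℕ), 1 ≤ n → MemIQ h (n • p) → MemIQ h p

/-- The congruence on `P` identifying `p ∼ p'` iff `p + h q = p' + h q'` for some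
`q, q' ∈ Q`; the quotient monoid `P/Q` is its quotient. -/
def quotCon {Q P : Type*} [AddCommMonoid Q] [AddCommMonoid P] (h : Q →+ P) : AddCon P where
  r p p' := ∃ q q' : Q, p + h q = p' + h q'
  iseqv := by
    constructor
    · exact fun p => ⟨0, 0, rfl⟩
    · rintro p p' ⟨q, q', e⟩; exact ⟨q', q, e.symm⟩
    · rintro p p' p'' ⟨q, q', e1⟩ ⟨s, s', e2⟩
      refine ⟨q + s, s' + q', ?_⟩
      calc p + h (q + s) = (p + h q) + h s := by rw [map_add, add_assoc]
        _ = (p' + h q') + h s := by rw [e1]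
        _ = (p' + h s) + h q' := add_right_comm _ _ _
        _ = (p'' + h s') + h q' := by rw [e2]
        _ = p'' + h (s' + q') := by rw [map_add, add_assoc]
  add' := by
    rintro a b c d ⟨q1, q1', e1⟩ ⟨q2, q2', e2⟩
    refine ⟨q1 + q2, q1' + q2', ?_⟩
    calc (a + c) + h (q1 + q2) = (a + h q1) + (c + h q2) := by
          rw [map_add]; exact add_add_add_comm _ _ _ _
      _ = (b + h q1') + (d + h q2') := by rw [e1, e2]
      _ = (b + d) + h (q1' + q2') := by rw [map_add]; exact (add_add_add_comm _ _ _ _).symm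

/-- A monoid is saturated if it is cancellative and whenever `n • a = n • b + p`
for some `n ≥ 1` there is `p'` with `a = b + p'`. -/
def Saturated (M : Type*) [AddCommMonoid M] : Prop :=
  Cancellative M ∧ ∀ (a b p : M) (n : ℕ), 1 ≤ n → n • a = n • b + p → ∃ p' : M, a = b + p'

private lemma dickson {ι : Type*} [Finite ι] (c : ℕ → ι → ℕ) :
    ∃ i j, i < j ∧ ∀ x, c i x ≤ c j x := by
  have h : Set.IsPWO (Set.univ : Set (ι → ℕ)) :=
    by
      have := Set.IsPWO.pi (s := fun _ : ι => (Set.univ : Set ℕ))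
        (fun _ => Set.IsWF.isPWO (Set.isWF_univ_iff.2 inferInstance))
      simpa [Set.pi_univ] using this
  obtain ⟨i, j, hij, hle⟩ := h (fun n => ⟨c n, Set.mem_univ _⟩)
  exact ⟨i, j, hij, fun x => (show c i ≤ c j from hle) x⟩

/-- In a fine sharp monoid, every nonempty set has a minimal element for strict divisibility. -/
private lemma exists_min_of_fine {P : Type*} [AddCommMonoid P]
    (hsharp : ∀ x y : P, x + y = 0 → x = 0)
    (hcanc : ∀ a b c : P, a + c = b + c → a = b) (hfg : AddMonoid.FG P)
    (S : Set P) (hne : S.Nonempty) :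
    ∃ p ∈ S, ∀ p' ∈ S, ∀ c : P, c ≠ 0 → p ≠ p' + c := by
  classical
  by_contra hcon
  push_neg at hcon
  have hstep : ∀ x : S, ∃ y : S, ∃ c : P, c ≠ 0 ∧ (x : P) = (y : P) + c := by
    rintro ⟨x, hx⟩
    obtain ⟨y, hy, c, hc, hxy⟩ := hcon x hx
    exact ⟨⟨y, hy⟩, c, hc, hxy⟩
  choose nxt cc hcc0 hcc using hstep
  set f : ℕ → S := fun n => nxt^[n] ⟨hne.choose, hne.choose_spec⟩ with hf
  have hfs : ∀ n, f (n + 1) = nxt (f n) := by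
    intro n; simp [hf, Function.iterate_succ_apply']
  set cs : ℕ → P := fun n => cc (f n) with hcs
  have hstep' : ∀ n, (f n : P) = (f (n + 1) : P) + cs n := by
    intro n; rw [hfs n]; exact hcc (f n)
  have hcs0 : ∀ n, cs n ≠ 0 := fun n => hcc0 (f n)
  have hsum : ∀ n, (f 0 : P) = (f n : P) + ∑ m ∈ Finset.range n, cs m := by
    intro n
    induction n with
    | zero => simp
    | succ n ih =>
      rw [ih, hstep' n, Finset.sum_range_succ]
      abel
  -- representations by generators
  obtain ⟨G, hG⟩ := hfg.fg_top
  have hrep : ∀ p : P, ∃ g : P → ℕ, ∑ x ∈ G, g x • x = p := by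
    intro p
    have hp : p ∈ AddSubmonoid.closure (G : Set P) := hG ▸ AddSubmonoid.mem_top p
    rw [← Submodule.span_nat_eq_addSubmonoidClosure] at hp
    obtain ⟨g, -, hg⟩ := Submodule.mem_span_finset.mp hp
    exact ⟨g, hg⟩
  choose g hg using fun n => hrep (f n : P)
  obtain ⟨i, j, hij, hle⟩ := dickson (fun n => fun x : G => g n x)
  -- f j = f i + e
  set e : P := ∑ x ∈ G, (g j x - g i x) • x with he
  have hfe : (f i : P) + e = (f j : P) := by
    rw [← hg i, ← hg j, he, ← Finset.sum_add_distrib]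
    apply Finset.sum_congr rfl
    intro x hx
    rw [← add_nsmul]
    congr 1
    have := hle ⟨x, hx⟩
    simp only at this
    omega
  obtain ⟨t, ht⟩ : ∃ t, ∑ m ∈ Finset.range j, cs m = (∑ m ∈ Finset.range i, cs m) + (cs i + t) := by
    refine ⟨∑ m ∈ Finset.Ico (i + 1) j, cs m, ?_⟩
    rw [Finset.range_eq_Ico, ← Finset.sum_Ico_consecutive _ (Nat.zero_le i) (le_of_lt hij),
      Finset.sum_eq_sum_Ico_succ_bot hij, Finset.range_eq_Ico]
  have key : (f i : P) + (0 : P) = (f i : P) + (e + (cs i + t)) := by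
    calc (f i : P) + (0 : P) = (f i : P) := by rw [add_zero]
    _ = (f i : P) + (e + (cs i + t)) := by
        have h1 := hsum i
        have h2 := hsum j
        rw [← hfe] at h2
        rw [ht] at h2
        -- h1 : f 0 = f i + ∑ range i
        -- h2 : f 0 = (f i + e) + (∑ range i + (cs i + t))
        have h3 : (f i : P) + ∑ m ∈ Finset.range i, cs m
            = ((f i : P) + (e + (cs i + t))) + ∑ m ∈ Finset.range i, cs m := by
          rw [← h1]
          rw [h2]
          abel
        have := hcanc _ _ _ h3
        rw [← this]
  have h0 : e + (cs i + t) = 0 := by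
    have := hcanc (0 : P) (e + (cs i + t)) (f i : P) (by rw [add_comm, add_comm (e + (cs i + t)) _]; exact key)
    exact this.symm
  have he0 : e = 0 := hsharp _ _ h0
  rw [he0, zero_add] at h0
  exact hcs0 i (hsharp _ _ h0)

universe u

/-- The square formed by `n ↦ n • q0 : ℕ → Q`, the diagonal `Δ : ℕ → ℕ × ℕ`,
`h : Q → P`, and `(m, n) ↦ m • p1 + n • pm1 : ℕ × ℕ → P` is cocartesian in the
category of additive commutative monoids: for every monoid `T` and homomorphisms
`u : Q →+ T`, `v : ℕ × ℕ →+ T` with `v (1,1) = u q0` there is a unique `w : P →+ T`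
with `w ∘ h = u`, `w p1 = v (1,0)` and `w pm1 = v (0,1)`. -/
def IsNodePushoutSquare {Q P : Type u} [AddCommMonoid Q] [AddCommMonoid P]
    (h : Q →+ P) (q0 : Q) (p1 pm1 : P) : Prop :=
  ∀ (T : Type u) [AddCommMonoid T] (u : Q →+ T) (v : ℕ × ℕ →+ T),
    v (1, 1) = u q0 →
    ∃! w : P →+ T, w.comp h = u ∧ w p1 = v (1, 0) ∧ w pm1 = v (0, 1)

/-- For an injective, integral homomorphism `h : Q →+ P` of fine, sharp monoids,
without nilpotents, with quotient monoid `P/Q` isomorphic to `ℤ`, there are a unique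
`q0 ∈ Q` and elements `p1, pm1 ∈ P` (unique up to interchanging them) with
`p1 + pm1 = h q0` making the square on `Δ : ℕ → ℕ × ℕ` cocartesian. -/
theorem pushout_of_quotient_int {Q P : Type u} [AddCommMonoid Q] [AddCommMonoid P]
    (hQsharp : Sharp Q) (hQcanc : Cancellative Q) (hQfg : AddMonoid.FG Q)
    (hPsharp : Sharp P) (hPcanc : Cancellative P) (hPfg : AddMonoid.FG P)
    (h : Q →+ P) (hinj : Function.Injective h) (hint : IntegralHom h)
    (hnil : WithoutNilpotents h)
    (hquot : Nonempty ((quotCon h).Quotient ≃+ ℤ)) :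
    ∃ (q0 : Q) (p1 pm1 : P), p1 + pm1 = h q0 ∧ IsNodePushoutSquare h q0 p1 pm1 ∧
      ∀ (q0' : Q) (p1' pm1' : P), p1' + pm1' = h q0' →
        IsNodePushoutSquare h q0' p1' pm1' →
        q0' = q0 ∧ ((p1' = p1 ∧ pm1' = pm1) ∨ (p1' = pm1 ∧ pm1' = p1)) := by
  classical
  obtain ⟨e⟩ := hquot
  set π : P →+ ℤ := e.toAddMonoidHom.comp (AddCon.mk' (quotCon h)) with hπdef
  have hπe : ∀ p : P, π p = e ((p : (quotCon h).Quotient)) := fun _ => rfl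
  have hcoe0 : (((0 : P) : (quotCon h).Quotient)) = 0 := rfl
  have hπh : ∀ q : Q, π (h q) = 0 := by
    intro q
    rw [hπe]
    have h1 : ((h q : P) : (quotCon h).Quotient) = ((0 : P) : (quotCon h).Quotient) :=
      (AddCon.eq _).mpr ⟨0, q, by simp⟩
    rw [h1, hcoe0, map_zero]
  have hrel : ∀ p p' : P, π p = π p' → ∃ s s' : Q, p + h s = p' + h s' := by
    intro p p' hpp
    rw [hπe, hπe] at hpp
    exact (AddCon.eq _).mp (e.injective hpp)
  have hker : ∀ p : P, π p = 0 → ∃ q : Q, p = h q := by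
    intro p hp
    obtain ⟨s, s', hss⟩ := hrel p 0 (by rw [hp, map_zero])
    obtain ⟨q3, q4, pp, h1, h2, _⟩ := hint s s' p 0 hss
    have hpp0 : pp = 0 := hPsharp pp (h q3) h2.symm
    exact ⟨q4, by rw [h1, hpp0, zero_add]⟩
  have hexact : ∀ p p' : P, π p = π p' → ∃ (r : P) (q q' : Q), p = r + h q ∧ p' = r + h q' := by
    intro p p' hpp
    obtain ⟨s, s', hss⟩ := hrel p p' hpp
    obtain ⟨q3, q4, r, h1, h2, _⟩ := hint s s' p p' hss
    exact ⟨r, q4, q3, h1, h2⟩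
  have hsurjπ : ∀ z : ℤ, ∃ p : P, π p = z := by
    intro z
    obtain ⟨x, hx⟩ := e.surjective z
    obtain ⟨p, hp⟩ := AddCon.mk'_surjective (c := quotCon h) x
    exact ⟨p, by rw [hπe, ← hx]; exact congrArg e hp⟩
  have hinj0 : ∀ q : Q, h q = 0 → q = 0 := fun q hq => hinj (by rw [hq, map_zero])
  have hcancel : ∀ (q q' : Q) (x : P), h q + x = h q' + x → q = q' :=
    fun q q' x hx => hinj (hPcanc _ _ x hx)
  have extract : ∀ (x : P) (c : Q), x = h c + x → c = 0 := by
    intro x c hc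
    apply hinj0
    apply hPcanc (h c) 0 x
    rw [zero_add]
    exact hc.symm
  -- choose the primitive elements p1, pm1
  obtain ⟨p1, hp1π, hp1min⟩ := exists_min_of_fine hPsharp hPcanc hPfg {p : P | π p = 1} (hsurjπ 1)
  obtain ⟨pm1, hpm1π, hpm1min⟩ :=
    exists_min_of_fine hPsharp hPcanc hPfg {p : P | π p = -1} (hsurjπ (-1))
  simp only [Set.mem_setOf_eq] at hp1π hpm1π
  have hprim1 : ∀ (q : Q) (p' : P), p1 = h q + p' → q = 0 := by
    intro q p' hq
    by_contra hq0
    have hπq : π p' = 1 := by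
      have h1 := congrArg π hq
      rw [hp1π, map_add, hπh] at h1
      omega
    exact hp1min p' hπq (h q) (fun h0 => hq0 (hinj0 q h0)) (by rw [hq, add_comm])
  have hprimm : ∀ (q : Q) (p' : P), pm1 = h q + p' → q = 0 := by
    intro q p' hq
    by_contra hq0
    have hπq : π p' = -1 := by
      have h1 := congrArg π hq
      rw [hpm1π, map_add, hπh] at h1
      omega
    exact hpm1min p' hπq (h q) (fun h0 => hq0 (hinj0 q h0)) (by rw [hq, add_comm])
  obtain ⟨q0, hq0⟩ := hker (p1 + pm1) (by rw [map_add, hp1π, hpm1π]; ring)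
  -- decomposition lemmas
  have hdecpos : ∀ (n : ℕ) (p : P), π p = (n : ℤ) → ∃ q : Q, p = h q + n • p1 := by
    intro n p hp
    rcases Nat.eq_zero_or_pos n with rfl | hn
    · obtain ⟨q, hq⟩ := hker p (by simpa using hp)
      exact ⟨q, by simpa using hq⟩
    · have hπn : π ((n : ℕ) • p1) = (n : ℤ) := by rw [map_nsmul, hp1π]; simp
      obtain ⟨r, q, q', hpr, hnr⟩ := hexact p (n • p1) (by rw [hp, hπn])
      by_cases hq' : q' = 0
      · subst hq'
        rw [map_zero, add_zero] at hnr
        exact ⟨q, by rw [hpr, hnr, add_comm]⟩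
      · exfalso
        have hmem : MemIQ h ((n : ℕ) • p1) := ⟨q', hq', r, by rw [hnr, add_comm]⟩
        obtain ⟨qq, hqq, pp, hpmem⟩ := hnil p1 n hn hmem
        exact hqq (hprim1 qq pp hpmem)
  have hdecneg : ∀ (n : ℕ) (p : P), π p = -(n : ℤ) → ∃ q : Q, p = h q + n • pm1 := by
    intro n p hp
    rcases Nat.eq_zero_or_pos n with rfl | hn
    · obtain ⟨q, hq⟩ := hker p (by simpa using hp)
      exact ⟨q, by simpa using hq⟩
    · have hπn : π ((n : ℕ) • pm1) = -(n : ℤ) := by rw [map_nsmul, hpm1π]; simp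
      obtain ⟨r, q, q', hpr, hnr⟩ := hexact p (n • pm1) (by rw [hp, hπn])
      by_cases hq' : q' = 0
      · subst hq'
        rw [map_zero, add_zero] at hnr
        exact ⟨q, by rw [hpr, hnr, add_comm]⟩
      · exfalso
        have hmem : MemIQ h ((n : ℕ) • pm1) := ⟨q', hq', r, by rw [hnr, add_comm]⟩
        obtain ⟨qq, hqq, pp, hpmem⟩ := hnil pm1 n hn hmem
        exact hqq (hprimm qq pp hpmem)
  have hdec : ∀ p : P, ∃ q : Q, p = h q + ((π p).toNat • p1 + (-(π p)).toNat • pm1) := by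
    intro p
    rcases le_or_gt 0 (π p) with hp | hp
    · obtain ⟨q, hq⟩ := hdecpos (π p).toNat p (by omega)
      refine ⟨q, ?_⟩
      have h2 : (-(π p)).toNat = 0 := by omega
      rw [h2, zero_nsmul, add_zero]
      exact hq
    · obtain ⟨q, hq⟩ := hdecneg (-(π p)).toNat p (by omega)
      refine ⟨q, ?_⟩
      have h2 : (π p).toNat = 0 := by omega
      rw [h2, zero_nsmul, zero_add]
      exact hq
  choose qof hqof using hdec
  have hqof_uniq : ∀ (p : P) (q : Q),
      p = h q + ((π p).toNat • p1 + (-(π p)).toNat • pm1) → qof p = q := by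
    intro p q hq
    apply hcancel _ _ ((π p).toNat • p1 + (-(π p)).toNat • pm1)
    rw [← hqof p, ← hq]
  have hqof_h : ∀ q : Q, qof (h q) = q := by
    intro q
    apply hqof_uniq
    rw [hπh]
    simp
  have hqof_p1 : qof p1 = 0 := by
    apply hqof_uniq
    rw [hp1π]
    have e1 : ((1 : ℤ)).toNat = 1 := rfl
    have e2 : ((-(1 : ℤ))).toNat = 0 := rfl
    rw [e1, e2, map_zero, zero_add, one_nsmul, zero_nsmul, add_zero]
  have hqof_pm1 : qof pm1 = 0 := by
    apply hqof_uniq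
    rw [hpm1π]
    have e1 : ((-1 : ℤ)).toNat = 0 := rfl
    have e2 : ((-(-1 : ℤ))).toNat = 1 := rfl
    rw [e1, e2, map_zero, zero_add, one_nsmul, zero_nsmul, zero_add]
  have hm_add : ∀ a b : P,
      (π a).toNat + (π b).toNat
        = (π (a + b)).toNat + min ((π a).toNat + (π b).toNat) ((-(π a)).toNat + (-(π b)).toNat)
      ∧ (-(π a)).toNat + (-(π b)).toNat
        = (-(π (a + b))).toNat
            + min ((π a).toNat + (π b).toNat) ((-(π a)).toNat + (-(π b)).toNat) := by
    intro a b
    rw [map_add]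
    omega
  have hqof_add : ∀ a b : P, qof (a + b)
      = qof a + qof b
        + (min ((π a).toNat + (π b).toNat) ((-(π a)).toNat + (-(π b)).toNat)) • q0 := by
    intro a b
    obtain ⟨hA, hB⟩ := hm_add a b
    apply hqof_uniq
    set k := min ((π a).toNat + (π b).toNat) ((-(π a)).toNat + (-(π b)).toNat) with hk
    calc a + b
        = (h (qof a) + ((π a).toNat • p1 + (-(π a)).toNat • pm1))
          + (h (qof b) + ((π b).toNat • p1 + (-(π b)).toNat • pm1)) := by
          rw [← hqof a, ← hqof b]
      _ = h (qof a + qof b)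
          + (((π a).toNat + (π b).toNat) • p1
            + ((-(π a)).toNat + (-(π b)).toNat) • pm1) := by
          rw [map_add, add_nsmul, add_nsmul]; abel
      _ = h (qof a + qof b)
          + (((π (a + b)).toNat + k) • p1 + ((-(π (a + b))).toNat + k) • pm1) := by
          rw [← hA, ← hB]
      _ = h (qof a + qof b)
          + ((π (a + b)).toNat • p1 + (-(π (a + b))).toNat • pm1) + k • (p1 + pm1) := by
          rw [add_nsmul, add_nsmul, smul_add]; abel
      _ = h (qof a + qof b + k • q0)
          + ((π (a + b)).toNat • p1 + (-(π (a + b))).toNat • pm1) := by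
          rw [hq0, ← map_nsmul, map_add h (qof a + qof b) (k • q0),
            map_add h (qof a) (qof b)]
          abel
  have hqof_zero : qof (0 : P) = 0 := by
    apply hqof_uniq
    simp
  -- the pushout property
  have hsquare : IsNodePushoutSquare h q0 p1 pm1 := by
    intro T _ u v hv
    have hv10 : ∀ m n : ℕ, v (m, n) = m • v (1, 0) + n • v (0, 1) := by
      intro m n
      have hmn : ((m, n) : ℕ × ℕ) = m • ((1, 0) : ℕ × ℕ) + n • ((0, 1) : ℕ × ℕ) := by
        simp [Prod.ext_iff]
      rw [hmn, map_add, map_nsmul, map_nsmul]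
    have hvz : v (0, 0) = 0 := by
      have h00 : ((0, 0) : ℕ × ℕ) = 0 := rfl
      rw [h00, map_zero]
    have hwadd : ∀ a b : P,
        (u (qof (a + b)) + v ((π (a + b)).toNat, (-(π (a + b))).toNat))
          = (u (qof a) + v ((π a).toNat, (-(π a)).toNat))
            + (u (qof b) + v ((π b).toNat, (-(π b)).toNat)) := by
      intro a b
      obtain ⟨hA, hB⟩ := hm_add a b
      rw [hqof_add a b]
      set k := min ((π a).toNat + (π b).toNat) ((-(π a)).toNat + (-(π b)).toNat) with hk
      have hval : v ((π a).toNat, (-(π a)).toNat) + v ((π b).toNat, (-(π b)).toNat)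
          = v ((π (a + b)).toNat, (-(π (a + b))).toNat) + k • u q0 := by
        rw [← map_add]
        have hpr : (((π a).toNat, (-(π a)).toNat) : ℕ × ℕ) + (((π b).toNat, (-(π b)).toNat))
            = ((((π (a + b)).toNat, (-(π (a + b))).toNat)) : ℕ × ℕ) + k • ((1, 1) : ℕ × ℕ) := by
          rw [Prod.ext_iff]
          constructor
          · simpa using hA
          · simpa using hB
        rw [hpr, map_add, map_nsmul, hv]
      calc u (qof a + qof b + k • q0) + v ((π (a + b)).toNat, (-(π (a + b))).toNat)
          = (u (qof a) + u (qof b))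
            + (v ((π (a + b)).toNat, (-(π (a + b))).toNat) + k • u q0) := by
            rw [map_add, map_add, map_nsmul]; abel
        _ = (u (qof a) + u (qof b))
            + (v ((π a).toNat, (-(π a)).toNat) + v ((π b).toNat, (-(π b)).toNat)) := by
            rw [← hval]
        _ = (u (qof a) + v ((π a).toNat, (-(π a)).toNat))
            + (u (qof b) + v ((π b).toNat, (-(π b)).toNat)) := by abel
    set w : P →+ T :=
      { toFun := fun p => u (qof p) + v ((π p).toNat, (-(π p)).toNat)
        map_zero' := by
          have h1 : (π (0 : P)).toNat = 0 := by simp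
          have h2 : (-(π (0 : P))).toNat = 0 := by simp
          show u (qof 0) + v ((π (0 : P)).toNat, (-(π (0 : P))).toNat) = 0
          rw [hqof_zero, h1, h2, hvz, map_zero, zero_add]
        map_add' := hwadd } with hw
    have hwapp : ∀ p : P, w p = u (qof p) + v ((π p).toNat, (-(π p)).toNat) := fun _ => rfl
    refine ⟨w, ⟨?_, ?_, ?_⟩, ?_⟩
    · ext q
      rw [AddMonoidHom.comp_apply, hwapp, hqof_h, hπh]
      have h1 : ((0 : ℤ)).toNat = 0 := rfl
      have h2 : ((-(0 : ℤ))).toNat = 0 := rfl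
      rw [h1, h2, hvz, add_zero]
    · rw [hwapp, hqof_p1, hp1π, map_zero, zero_add]
      have e1 : ((1 : ℤ)).toNat = 1 := rfl
      have e2 : ((-(1 : ℤ))).toNat = 0 := rfl
      rw [e1, e2]
    · rw [hwapp, hqof_pm1, hpm1π, map_zero, zero_add]
      have e1 : ((-1 : ℤ)).toNat = 0 := rfl
      have e2 : ((-(-1 : ℤ))).toNat = 1 := rfl
      rw [e1, e2]
    · rintro w' ⟨hw'h, hw'1, hw'2⟩
      ext p
      rw [hwapp]
      calc w' p
          = w' (h (qof p) + ((π p).toNat • p1 + (-(π p)).toNat • pm1)) := by rw [← hqof p]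
        _ = u (qof p) + ((π p).toNat • v (1, 0) + (-(π p)).toNat • v (0, 1)) := by
            rw [map_add, map_add, map_nsmul, map_nsmul, hw'1, hw'2,
              show w' (h (qof p)) = u (qof p) from DFunLike.congr_fun hw'h (qof p)]
        _ = u (qof p) + v ((π p).toNat, (-(π p)).toNat) := by rw [← hv10]
  refine ⟨q0, p1, pm1, hq0, hsquare, ?_⟩
  intro q0' p1' pm1' hsum' hsq'
  -- surjectivity of the primed decomposition
  have hsurj' : ∀ p : P, ∃ (q : Q) (m n : ℕ), p = h q + m • p1' + n • pm1' := by
    set T : AddSubmonoid P :=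
      { carrier := {p : P | ∃ (q : Q) (m n : ℕ), p = h q + m • p1' + n • pm1'}
        zero_mem' := ⟨0, 0, 0, by simp⟩
        add_mem' := by
          rintro a b ⟨qa, ma, na, rfl⟩ ⟨qb, mb, nb, rfl⟩
          exact ⟨qa + qb, ma + mb, na + nb, by rw [map_add, add_nsmul, add_nsmul]; abel⟩ } with hT
    have hmemT : ∀ (q : Q) (m n : ℕ), h q + m • p1' + n • pm1' ∈ T := fun q m n => ⟨q, m, n, rfl⟩
    set u' : Q →+ T := h.codRestrict T (fun q => ⟨q, 0, 0, by simp⟩) with hu'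
    set v' : ℕ × ℕ →+ T :=
      { toFun := fun mn => ⟨mn.1 • p1' + mn.2 • pm1', ⟨0, mn.1, mn.2, by rw [map_zero, zero_add]⟩⟩
        map_zero' := by
          apply Subtype.ext
          simp
        map_add' := by
          rintro ⟨ma, na⟩ ⟨mb, nb⟩
          apply Subtype.ext
          show (ma + mb) • p1' + (na + nb) • pm1'
            = (ma • p1' + na • pm1') + (mb • p1' + nb • pm1')
          rw [add_nsmul, add_nsmul]; abel } with hv'
    have hv'11 : v' (1, 1) = u' q0' := by
      apply Subtype.ext
      show (1 : ℕ) • p1' + (1 : ℕ) • pm1' = h q0'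
      rw [one_nsmul, one_nsmul, hsum']
    obtain ⟨w, ⟨hwh, hw1, hw2⟩, -⟩ := hsq' T u' v' hv'11
    set vP : ℕ × ℕ →+ P :=
      { toFun := fun mn => mn.1 • p1' + mn.2 • pm1'
        map_zero' := by simp
        map_add' := by
          rintro ⟨ma, na⟩ ⟨mb, nb⟩
          show (ma + mb) • p1' + (na + nb) • pm1'
            = (ma • p1' + na • pm1') + (mb • p1' + nb • pm1')
          rw [add_nsmul, add_nsmul]; abel } with hvP
    have hvP11 : vP (1, 1) = h q0' := by
      show (1 : ℕ) • p1' + (1 : ℕ) • pm1' = h q0'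
      rw [one_nsmul, one_nsmul, hsum']
    obtain ⟨wP, -, hwPuniq⟩ := hsq' P h vP hvP11
    have hid : AddMonoidHom.id P = wP := by
      apply hwPuniq
      refine ⟨by ext q; rfl, ?_, ?_⟩
      · show p1' = (1 : ℕ) • p1' + (0 : ℕ) • pm1'
        rw [one_nsmul, zero_nsmul, add_zero]
      · show pm1' = (0 : ℕ) • p1' + (1 : ℕ) • pm1'
        rw [one_nsmul, zero_nsmul, zero_add]
    have hsub : T.subtype.comp w = wP := by
      apply hwPuniq
      refine ⟨?_, ?_, ?_⟩
      · ext q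
        show ((w (h q) : P)) = h q
        rw [show w (h q) = u' q from DFunLike.congr_fun hwh q]
        rfl
      · show ((w p1' : P)) = vP (1, 0)
        rw [hw1]
        rfl
      · show ((w pm1' : P)) = vP (0, 1)
        rw [hw2]
        rfl
    intro p
    have hwp : (w p : P) = p := by
      have h1 := congrArg (fun (f : P →+ P) => f p) (hsub.trans hid.symm)
      simpa using h1
    obtain ⟨q, m, n, hrepr⟩ := (w p).2
    exact ⟨q, m, n, by rw [← hwp]; exact hrepr⟩
  have hπpm' : π pm1' = -(π p1') := by
    have h1 : π (p1' + pm1') = 0 := by rw [hsum', hπh]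
    rw [map_add] at h1
    omega
  have hπrep : ∀ (p : P) (q : Q) (m n : ℕ), p = h q + m • p1' + n • pm1' →
      π p = (m : ℤ) * π p1' - (n : ℤ) * π p1' := by
    intro p q m n hp
    have h1 := congrArg π hp
    rw [map_add, map_add, hπh, map_nsmul, map_nsmul, hπpm', nsmul_eq_mul, nsmul_eq_mul] at h1
    rw [h1]
    ring
  have hd : π p1' = 1 ∨ π p1' = -1 := by
    obtain ⟨q, m, n, hq⟩ := hsurj' p1
    have h1 := hπrep p1 q m n hq
    rw [hp1π] at h1
    exact Int.isUnit_iff.mp (IsUnit.of_mul_eq_one (a := π p1') ((m : ℤ) - (n : ℤ)) (by linear_combination -h1))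
  have collapse1 : ∀ (q : Q) (n : ℕ), h q + (n + 1) • p1' + n • pm1' = h (q + n • q0') + p1' := by
    intro q n
    calc h q + (n + 1) • p1' + n • pm1'
        = h q + n • (p1' + pm1') + p1' := by rw [succ_nsmul, smul_add]; abel
      _ = h q + h (n • q0') + p1' := by rw [hsum', map_nsmul]
      _ = h (q + n • q0') + p1' := by rw [map_add]
  have collapse2 : ∀ (q : Q) (m : ℕ), h q + m • p1' + (m + 1) • pm1' = h (q + m • q0') + pm1' := by
    intro q m
    calc h q + m • p1' + (m + 1) • pm1'
        = h q + m • (p1' + pm1') + pm1' := by rw [succ_nsmul, smul_add]; abel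
      _ = h q + h (m • q0') + pm1' := by rw [hsum', map_nsmul]
      _ = h (q + m • q0') + pm1' := by rw [map_add]
  have sharpQ3 : ∀ (a b : Q), b + a = 0 → a = 0 := by
    intro a b hab
    apply hQsharp a b
    rw [add_comm]
    exact hab
  rcases hd with hd1 | hd1
  · -- π p1' = 1
    have hπm' : π pm1' = -1 := by rw [hπpm', hd1]
    obtain ⟨a, ha⟩ := hdecpos 1 p1' (by rw [hd1]; simp)
    rw [one_nsmul] at ha
    obtain ⟨b, hb⟩ := hdecneg 1 pm1' (by rw [hπm']; simp)
    rw [one_nsmul] at hb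
    have hp1'eq : p1' = p1 := by
      obtain ⟨q, m, n, hq⟩ := hsurj' p1
      have h1 := hπrep p1 q m n hq
      rw [hp1π, hd1, mul_one, mul_one] at h1
      have hmn : m = n + 1 := by omega
      rw [hmn, collapse1, ha] at hq
      have h0 : (q + n • q0') + a = 0 := by
        apply extract p1
        calc p1 = h (q + n • q0') + (h a + p1) := hq
          _ = h ((q + n • q0') + a) + p1 := by rw [map_add h (q + n • q0') a]; abel
      have ha0 : a = 0 := sharpQ3 a _ h0
      rw [ha0, map_zero, zero_add] at ha
      exact ha
    have hpm1'eq : pm1' = pm1 := by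
      obtain ⟨q, m, n, hq⟩ := hsurj' pm1
      have h1 := hπrep pm1 q m n hq
      rw [hpm1π, hd1, mul_one, mul_one] at h1
      have hmn : n = m + 1 := by omega
      rw [hmn, collapse2, hb] at hq
      have h0 : (q + m • q0') + b = 0 := by
        apply extract pm1
        calc pm1 = h (q + m • q0') + (h b + pm1) := hq
          _ = h ((q + m • q0') + b) + pm1 := by rw [map_add h (q + m • q0') b]; abel
      have hb0 : b = 0 := sharpQ3 b _ h0
      rw [hb0, map_zero, zero_add] at hb
      exact hb
    have hq0eq : q0' = q0 := hinj (by rw [← hsum', hp1'eq, hpm1'eq, hq0])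
    exact ⟨hq0eq, Or.inl ⟨hp1'eq, hpm1'eq⟩⟩
  · -- π p1' = -1
    have hπm' : π pm1' = 1 := by rw [hπpm', hd1]; ring
    obtain ⟨a, ha⟩ := hdecneg 1 p1' (by rw [hd1]; simp)
    rw [one_nsmul] at ha
    obtain ⟨b, hb⟩ := hdecpos 1 pm1' (by rw [hπm']; simp)
    rw [one_nsmul] at hb
    have hp1'eq : p1' = pm1 := by
      obtain ⟨q, m, n, hq⟩ := hsurj' pm1
      have h1 := hπrep pm1 q m n hq
      rw [hpm1π, hd1] at h1
      have hmn : m = n + 1 := by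
        have h2 : (-1 : ℤ) = -(m : ℤ) + n := by linear_combination h1
        omega
      rw [hmn, collapse1, ha] at hq
      have h0 : (q + n • q0') + a = 0 := by
        apply extract pm1
        calc pm1 = h (q + n • q0') + (h a + pm1) := hq
          _ = h ((q + n • q0') + a) + pm1 := by rw [map_add h (q + n • q0') a]; abel
      have ha0 : a = 0 := sharpQ3 a _ h0
      rw [ha0, map_zero, zero_add] at ha
      exact ha
    have hpm1'eq : pm1' = p1 := by
      obtain ⟨q, m, n, hq⟩ := hsurj' p1
      have h1 := hπrep p1 q m n hq
      rw [hp1π, hd1] at h1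
      have hmn : n = m + 1 := by
        have h2 : (1 : ℤ) = -(m : ℤ) + n := by linear_combination h1
        omega
      rw [hmn, collapse2, hb] at hq
      have h0 : (q + m • q0') + b = 0 := by
        apply extract p1
        calc p1 = h (q + m • q0') + (h b + p1) := hq
          _ = h ((q + m • q0') + b) + p1 := by rw [map_add h (q + m • q0') b]; abel
      have hb0 : b = 0 := sharpQ3 b _ h0
      rw [hb0, map_zero, zero_add] at hb
      exact hb
    have hq0eq : q0' = q0 := hinj (by rw [← hsum', hp1'eq, hpm1'eq, add_comm, hq0])
    exact ⟨hq0eq, Or.inr ⟨hp1'eq, hpm1'eq⟩⟩
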